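/- (1) For every x ∈ ℝ^{r+s−1}, the model ideal 𝔞_x = 𝔞_{O_K,x} is not invertible: there is no subset 𝔟 ⊆ K whose image under σ is a quasicrystal and which satisfies A_σ·𝔟 ⊆ 𝔟, such that 𝔞_x·𝔟 := {αβ : α ∈ 𝔞_x, β ∈ 𝔟} = A_σ; consequently the class of 𝔞_x is not invertible in the monoid of classes of fractional quasicrystalline ideals modulo scaling by K^×. (2) If there exists a unit α ∈ O_K^× with |σ_i(α)| = |σ_i(u)|^{x_i} for all i = 1,…,r+s−1, then 𝔞̄_x·𝔞̄_{−x} = A_σ, so the class of 𝔞̄_x is invertible with inverse the class of 𝔞̄_{−x}. -/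

import Mathlib

open NumberField Pointwise
open scoped nonZeroDivisors

/-- A subset of `ℂ` is uniformly discrete if some `r > 0` separates distinct points. -/
def UniformlyDiscreteC (Λ : Set ℂ) : Prop :=
  ∃ r > 0, ∀ x ∈ Λ, ∀ y ∈ Λ, x ≠ y → r ≤ ‖x - y‖

/-- A subset of `ℂ` is relatively dense in `S` if every point of `S` is within a fixed
distance `R` of the set. -/
def RelativelyDenseIn (S Λ : Set ℂ) : Prop :=
  ∃ R > 0, ∀ v ∈ S, ∃ x ∈ Λ, ‖v - x‖ < R

/-- A quasicrystal (in the sense of Meyer) in the completion `S` of the embedded field: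
a Delaunay set `Λ` with `Λ - Λ ⊆ Λ + F` for some finite set `F`. -/
def IsQuasicrystalIn (S Λ : Set ℂ) : Prop :=
  UniformlyDiscreteC Λ ∧ RelativelyDenseIn S Λ ∧ ∃ F : Finset ℂ, Λ - Λ ⊆ Λ + (F : Set ℂ)

variable (K : Type*) [Field K] [NumberField K] (σ : InfinitePlace K)

/-- A Pisot–Vijayaraghavan unit: a unit of infinite order whose absolute values at all the
places other than `σ` are `< 1`. -/
def IsPVUnit (u : (𝓞 K)ˣ) : Prop :=
  (¬ IsOfFinOrder u) ∧ ∀ w : InfinitePlace K, w ≠ σ → w ((u : 𝓞 K) : K) < 1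

/-- The model ideal `𝔞^⋆_{𝔄,x}` associated to a fractional ideal `𝔄`, exponent vector `x` and
strictness data `b` (`b w = true` means `≤`, `b w = false` means `<`). -/
def modelSet (u : (𝓞 K)ˣ) (𝔄 : FractionalIdeal (𝓞 K)⁰ K)
    (x : {w : InfinitePlace K // w ≠ σ} → ℝ) (b : {w : InfinitePlace K // w ≠ σ} → Bool) :
    Set K :=
  {α : K | α ∈ 𝔄 ∧ ∀ w : {w : InfinitePlace K // w ≠ σ},
      if b w then (w : InfinitePlace K) α ≤ ((w : InfinitePlace K) ((u : 𝓞 K) : K)) ^ (x w)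
      else (w : InfinitePlace K) α < ((w : InfinitePlace K) ((u : 𝓞 K) : K)) ^ (x w)}

/-- The quasicrystalline ring `A_σ` as a subset of `K`. -/
def AqcSet : Set K :=
  {α : K | (∃ a : 𝓞 K, (a : K) = α) ∧ ∀ w : InfinitePlace K, w ≠ σ → w α ≤ 1}

private theorem part1_aux (K : Type*) [Field K] [NumberField K] (σ : InfinitePlace K)
    (u : (𝓞 K)ˣ) (hufin : ¬ IsOfFinOrder u)
    (hulam : ∀ w : InfinitePlace K, w ≠ σ → w ((u : 𝓞 K) : K) < 1)
    (x : {w : InfinitePlace K // w ≠ σ} → ℝ) (𝔟 : Set K)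
    (hprod : modelSet K σ u 1 x (fun _ => false) * 𝔟 = AqcSet K σ) : False := by
  classical
  have hune : ((u : 𝓞 K) : K) ≠ 0 := by simp
  -- there is a place other than σ
  have hex : ∃ w : InfinitePlace K, w ≠ σ := by
    by_contra h
    push_neg at h
    apply hufin
    have hall : ∀ w : InfinitePlace K, w ((u : 𝓞 K) : K) = 1 := by
      have huniv : (Finset.univ : Finset (InfinitePlace K)) = {σ} := by
        ext w; simp [h w]
      have hpr := NumberField.InfinitePlace.prod_eq_abs_norm ((u : 𝓞 K) : K)
      rw [huniv, Finset.prod_singleton, NumberField.Units.norm] at hpr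
      norm_num at hpr
      have h0 : 0 ≤ σ ((u : 𝓞 K) : K) := AbsoluteValue.nonneg _ _
      have hσ : σ ((u : 𝓞 K) : K) = 1 := by
        rcases lt_trichotomy (σ ((u : 𝓞 K) : K)) 1 with hl | he | hg
        · exact absurd hpr (pow_lt_one₀ h0 hl
            (NumberField.InfinitePlace.mult_pos (w := σ)).ne').ne
        · exact he
        · exact absurd hpr (one_lt_pow₀ hg
            (NumberField.InfinitePlace.mult_pos (w := σ)).ne').ne'
      intro w; rw [h w, hσ]
    have := (NumberField.Units.mem_torsion K (x := u)).mpr hall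
    rwa [NumberField.Units.torsion, CommGroup.mem_torsion] at this
  haveI : Nonempty {w : InfinitePlace K // w ≠ σ} := by
    obtain ⟨w, hw⟩ := hex; exact ⟨⟨w, hw⟩⟩
  -- decompose 1
  have h1 : (1 : K) ∈ AqcSet K σ := ⟨⟨1, by simp⟩, fun w _ => by simp⟩
  rw [← hprod] at h1
  obtain ⟨α, hα, β, hβ, hαβ⟩ := h1
  obtain ⟨hα1, hαb⟩ := hα
  have hαb' : ∀ w : {w : InfinitePlace K // w ≠ σ},
      (w : InfinitePlace K) α < ((w : InfinitePlace K) ((u : 𝓞 K) : K)) ^ (x w) := by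
    intro w; have := hαb w; simpa using this
  have hαβ' : α * β = 1 := hαβ
  have hαne : α ≠ 0 := by
    intro h; rw [h, zero_mul] at hαβ'; exact (one_ne_zero (α := K)) hαβ'.symm
  -- notation
  set t : {w : InfinitePlace K // w ≠ σ} → ℝ :=
    fun w => (w : InfinitePlace K) ((u : 𝓞 K) : K) with ht
  have htpos : ∀ w, 0 < t w := fun w => InfinitePlace.pos_iff.mpr hune
  have htlt : ∀ w, t w < 1 := fun w => hulam w.1 w.2
  have hαpos : ∀ w : {w : InfinitePlace K // w ≠ σ}, 0 < (w : InfinitePlace K) α :=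
    fun w => InfinitePlace.pos_iff.mpr hαne
  set ρ : {w : InfinitePlace K // w ≠ σ} → ℝ :=
    fun w => (t w) ^ (x w) / (w : InfinitePlace K) α with hρdef
  have hρ : ∀ w, 1 < ρ w := fun w => (one_lt_div (hαpos w)).mpr (hαb' w)
  obtain ⟨w₁, hw₁⟩ := Finite.exists_max t
  obtain ⟨w₂, hw₂⟩ := Finite.exists_min ρ
  obtain ⟨N, hN⟩ := exists_pow_lt_of_lt_one (sub_pos.mpr (hρ w₂)) (htlt w₁)
  have hpN : 0 < t w₁ ^ N := pow_pos (htpos w₁) N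
  set m : ℕ := ⌊(t w₁ ^ N)⁻¹⌋₊ + 1 with hm
  have hm1 : 1 < (m : ℝ) * t w₁ ^ N := by
    have hlt : (t w₁ ^ N)⁻¹ < (m : ℝ) := by
      rw [hm]; push_cast; exact Nat.lt_floor_add_one _
    calc (1:ℝ) = (t w₁ ^ N)⁻¹ * t w₁ ^ N := (inv_mul_cancel₀ hpN.ne').symm
      _ < (m : ℝ) * t w₁ ^ N := by exact mul_lt_mul_of_pos_right hlt hpN
  have hm2 : (m : ℝ) * t w₁ ^ N ≤ 1 + t w₁ ^ N := by
    have hle : (m : ℝ) ≤ (t w₁ ^ N)⁻¹ + 1 := by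
      rw [hm]; push_cast
      exact add_le_add_left (Nat.floor_le (by positivity)) 1
    calc (m : ℝ) * t w₁ ^ N ≤ ((t w₁ ^ N)⁻¹ + 1) * t w₁ ^ N :=
        mul_le_mul_of_nonneg_right hle hpN.le
      _ = 1 + t w₁ ^ N := by field_simp
  have hkey : ∀ w, (m : ℝ) * t w ^ N < ρ w := by
    intro w
    have h1' : t w ^ N ≤ t w₁ ^ N := pow_le_pow_left₀ (htpos w).le (hw₁ w) N
    calc (m : ℝ) * t w ^ N ≤ (m : ℝ) * t w₁ ^ N :=
          mul_le_mul_of_nonneg_left h1' (by positivity)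
      _ ≤ 1 + t w₁ ^ N := hm2
      _ < 1 + (ρ w₂ - 1) := by linarith
      _ = ρ w₂ := by ring
      _ ≤ ρ w := hw₂ w
  -- the new element
  set α' : K := α * (m : K) * ((u : 𝓞 K) : K) ^ N with hα'
  have hwα' : ∀ w : {w : InfinitePlace K // w ≠ σ},
      (w : InfinitePlace K) α' = (w : InfinitePlace K) α * ((m : ℝ) * t w ^ N) := by
    intro w
    rw [hα', map_mul, map_mul, map_pow]
    have hnat : (w : InfinitePlace K) ((m : ℕ) : K) = (m : ℝ) := by
      rw [← InfinitePlace.norm_embedding_eq, map_natCast]; simp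
    rw [hnat, ht]; ring
  have hα'mem : α' ∈ modelSet K σ u 1 x (fun _ => false) := by
    constructor
    · obtain ⟨a, ha⟩ := (FractionalIdeal.mem_one_iff _).mp hα1
      refine (FractionalIdeal.mem_one_iff _).mpr ⟨a * (m : 𝓞 K) * (u : 𝓞 K) ^ N, ?_⟩
      rw [map_mul, map_mul, map_pow, ha, map_natCast]
    · intro w
      simp only [if_neg (by simp : ¬ ((fun _ => false) w = true))]
      rw [hwα' w]
      have := hkey w
      have h2 : (w : InfinitePlace K) α * ((m : ℝ) * t w ^ N)
          < (w : InfinitePlace K) α * ρ w :=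
        mul_lt_mul_of_pos_left this (hαpos w)
      have h3 : (w : InfinitePlace K) α * ρ w = (t w) ^ (x w) := by
        have hrr : ρ w = t w ^ (x w) / (w : InfinitePlace K) α := rfl
        rw [hrr, mul_comm, div_mul_cancel₀ _ (hαpos w).ne']
      rw [← h3]; exact h2
  -- contradiction
  have hmem : α' * β ∈ AqcSet K σ := by
    rw [← hprod]; exact Set.mul_mem_mul hα'mem hβ
  have hle1 : (w₁ : InfinitePlace K) (α' * β) ≤ 1 := hmem.2 w₁.1 w₁.2
  have hβval : (w₁ : InfinitePlace K) α * (w₁ : InfinitePlace K) β = 1 := by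
    rw [← map_mul, hαβ', map_one]
  rw [map_mul, hwα' w₁] at hle1
  have : (1:ℝ) < (w₁ : InfinitePlace K) α * ((m:ℝ) * t w₁ ^ N) * (w₁ : InfinitePlace K) β := by
    calc (1:ℝ) = (w₁ : InfinitePlace K) α * (w₁ : InfinitePlace K) β * 1 := by rw [hβval, one_mul]
      _ < (w₁ : InfinitePlace K) α * (w₁ : InfinitePlace K) β * ((m:ℝ) * t w₁ ^ N) := by
          rw [hβval]; simpa using hm1
      _ = _ := by ring
  linarith

private theorem part2_aux (K : Type*) [Field K] [NumberField K] (σ : InfinitePlace K)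
    (u : (𝓞 K)ˣ)
    (x : {w : InfinitePlace K // w ≠ σ} → ℝ)
    (hex : ∃ α : (𝓞 K)ˣ, ∀ w : {w : InfinitePlace K // w ≠ σ},
          (w : InfinitePlace K) (((α : 𝓞 K)) : K)
            = ((w : InfinitePlace K) ((u : 𝓞 K) : K)) ^ (x w)) :
      modelSet K σ u 1 x (fun _ => true) * modelSet K σ u 1 (-x) (fun _ => true)
        = AqcSet K σ := by
  obtain ⟨α₀, hα₀⟩ := hex
  have hune : ((u : 𝓞 K) : K) ≠ 0 := by simp
  ext γ
  constructor
  · rintro ⟨a, ⟨ha1, ha2⟩, c, ⟨hc1, hc2⟩, rfl⟩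
    refine ⟨?_, ?_⟩
    · obtain ⟨a', ha'⟩ := (FractionalIdeal.mem_one_iff _).mp ha1
      obtain ⟨c', hc'⟩ := (FractionalIdeal.mem_one_iff _).mp hc1
      exact ⟨a' * c', by show algebraMap (𝓞 K) K _ = a * c; rw [map_mul, ha', hc']⟩
    · intro w hw
      have h2 := ha2 ⟨w, hw⟩
      have h3 := hc2 ⟨w, hw⟩
      simp only [if_true] at h2 h3
      have ht : 0 < w ((u : 𝓞 K) : K) := InfinitePlace.pos_iff.mpr hune
      rw [map_mul]
      calc w a * w c ≤ (w ((u : 𝓞 K) : K)) ^ (x ⟨w, hw⟩) * (w ((u : 𝓞 K) : K)) ^ ((-x) ⟨w, hw⟩) :=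
            mul_le_mul h2 h3 (AbsoluteValue.nonneg _ _) (Real.rpow_nonneg ht.le _)
        _ = 1 := by
            rw [Pi.neg_apply, ← Real.rpow_add ht]; simp
  · rintro ⟨⟨g, hg⟩, hbd⟩
    have hone : ((α₀ : 𝓞 K) : K) * (((α₀⁻¹ : (𝓞 K)ˣ) : 𝓞 K) : K) = 1 := by
      rw [← map_mul (algebraMap (𝓞 K) K)]
      norm_num
    refine ⟨((α₀ : 𝓞 K) : K), ⟨?_, ?_⟩, (((α₀⁻¹ : (𝓞 K)ˣ) : 𝓞 K) : K) * γ, ⟨?_, ?_⟩, ?_⟩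
    · exact (FractionalIdeal.mem_one_iff _).mpr ⟨α₀, rfl⟩
    · intro w
      simp only [if_true]
      exact (hα₀ w).le
    · refine (FractionalIdeal.mem_one_iff _).mpr ⟨((α₀⁻¹ : (𝓞 K)ˣ) : 𝓞 K) * g, ?_⟩
      show algebraMap (𝓞 K) K _ = _
      rw [map_mul, show algebraMap (𝓞 K) K g = γ from hg]
    · intro w
      simp only [if_true]
      have ht : 0 < (w : InfinitePlace K) ((u : 𝓞 K) : K) := InfinitePlace.pos_iff.mpr hune
      have hγ : (w : InfinitePlace K) γ ≤ 1 := hbd w.1 w.2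
      have hαw : (w : InfinitePlace K) (((α₀⁻¹ : (𝓞 K)ˣ) : 𝓞 K) : K)
          = ((w : InfinitePlace K) ((u : 𝓞 K) : K)) ^ (-(x w)) := by
        have := congrArg (w : InfinitePlace K) hone
        rw [map_mul, map_one, hα₀ w] at this
        rw [Real.rpow_neg ht.le]
        field_simp at this ⊢
        linarith [this]
      rw [map_mul, hαw, Pi.neg_apply]
      calc ((w:InfinitePlace K) ((u : 𝓞 K):K)) ^ (-(x w)) * (w : InfinitePlace K) γ
          ≤ ((w:InfinitePlace K) ((u : 𝓞 K):K)) ^ (-(x w)) * 1 :=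
            mul_le_mul_of_nonneg_left hγ (Real.rpow_nonneg ht.le _)
        _ = _ := by rw [mul_one]
    · show ((α₀ : 𝓞 K) : K) * ((((α₀⁻¹ : (𝓞 K)ˣ) : 𝓞 K) : K) * γ) = γ
      rw [← mul_assoc, hone, one_mul]

/-- (1) The model ideals `𝔞_x = 𝔞_{O_K,x}` are never invertible: there is no quasicrystalline
fractional ideal `𝔟` with `𝔞_x·𝔟 = A_σ`.  (2) If there is a unit `α` with
`|σ_i(α)| = |σ_i(u)|^{x_i}` for all `i`, then `𝔞̄_x · 𝔞̄_{-x} = A_σ`, so the class of `𝔞̄_x`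
is invertible with inverse the class of `𝔞̄_{-x}`. -/
theorem stmt2 (u : (𝓞 K)ˣ) (hu : IsPVUnit K σ u) :
    (∀ x : {w : InfinitePlace K // w ≠ σ} → ℝ,
      ¬ ∃ 𝔟 : Set K,
          IsQuasicrystalIn (closure (Set.range σ.embedding)) (σ.embedding '' 𝔟) ∧
          (∀ a ∈ AqcSet K σ, ∀ b ∈ 𝔟, a * b ∈ 𝔟) ∧
          modelSet K σ u 1 x (fun _ => false) * 𝔟 = AqcSet K σ) ∧
    (∀ x : {w : InfinitePlace K // w ≠ σ} → ℝ,
      (∃ α : (𝓞 K)ˣ, ∀ w : {w : InfinitePlace K // w ≠ σ},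
          (w : InfinitePlace K) (((α : 𝓞 K)) : K)
            = ((w : InfinitePlace K) ((u : 𝓞 K) : K)) ^ (x w)) →
      modelSet K σ u 1 x (fun _ => true) * modelSet K σ u 1 (-x) (fun _ => true)
        = AqcSet K σ) := by

  obtain ⟨hufin, hulam⟩ := hu
  constructor
  · rintro x ⟨𝔟, -, -, hprod⟩
    exact absurd hprod (by
      intro hprod
      exact part1_aux K σ u hufin hulam x 𝔟 hprod)
  · intro x hex
    exact part2_aux K σ u x hex
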